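/- Let S₂ be the set of finite sequences of positive integers of length at least 2, and let Z̃ be the set of Z-reduced forms whose discriminant has the form k²+4 or k²−4 for some integer k. Then the map τ: S₂ → Z̃ is a bijection whose inverse is the restriction of β to Z̃. Moreover, the discriminant of τ((q₁,…,q_l)) equals ([q₁,…,q_l] − [q₁−1,q₂,…,q_{l−1},q_l−1])² + (−1)^l·4. -/

import Mathlib

/-- A binary quadratic form `A x² + B x y + C y²` with integer coefficients. -/
structure QF where
  a : ℤ
  b : ℤ
  c : ℤ

/-- The discriminant `B² - 4AC` of a form. -/
def QF.disc (f : QF) : ℤ := f.b ^ 2 - 4 * f.a * f.c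

/-- The action of a matrix `[[α, β], [γ, δ]]` on a form:
`f(x,y) ↦ f(αx + βy, γx + δy)`. -/
def QF.transform (f : QF) (α β γ δ : ℤ) : QF :=
  ⟨f.a * α ^ 2 + f.b * α * γ + f.c * γ ^ 2,
   2 * f.a * α * β + f.b * (α * δ + β * γ) + 2 * f.c * γ * δ,
   f.a * β ^ 2 + f.b * β * δ + f.c * δ ^ 2⟩

/-- A form is indefinite if its discriminant is positive and not a perfect square. -/
def QF.IsIndefinite (f : QF) : Prop := 0 < f.disc ∧ ¬ IsSquare f.disc

/-- An indefinite form `(A,B,C)` is Z-reduced if `A,B,C > 0` and `B > A + C`. -/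
def QF.IsZReduced (f : QF) : Prop :=
  f.IsIndefinite ∧ 0 < f.a ∧ 0 < f.b ∧ 0 < f.c ∧ f.a + f.c < f.b

/-- An indefinite form `(A,B,C)` is G-reduced if `AC < 0` and `B > |A + C|`. -/
def QF.IsGReduced (f : QF) : Prop :=
  f.IsIndefinite ∧ f.a * f.c < 0 ∧ |f.a + f.c| < f.b

/-- G-reduced with `A > 0`. -/
def QF.IsGPlus (f : QF) : Prop := f.IsGReduced ∧ 0 < f.a

/-- G-reduced with `A < 0`. -/
def QF.IsGMinus (f : QF) : Prop := f.IsGReduced ∧ f.a < 0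

/-- `(t, u)` is the fundamental solution of `|t² - Δ u²| = 4`:
a solution in positive integers with `u` minimal. -/
def IsFundSol (Δ t u : ℤ) : Prop :=
  0 < t ∧ 0 < u ∧ |t ^ 2 - Δ * u ^ 2| = 4 ∧
    ∀ t' u' : ℤ, 0 < t' → 0 < u' → |t' ^ 2 - Δ * u' ^ 2| = 4 → u ≤ u'

/-- The continuant of a finite sequence of integers. -/
def cont : List ℤ → ℤ
  | [] => 1
  | [q] => q
  | q :: r :: t => q * cont (r :: t) + cont t

/-- `L` is the list of partial quotients of a regular continued fraction expansion of
the rational number `x`: all partial quotients are positive and the value of the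
continued fraction, namely `cont L / cont L.tail`, equals `x`. -/
def IsCF (x : ℚ) (L : List ℤ) : Prop :=
  L ≠ [] ∧ (∀ q ∈ L, 0 < q) ∧ (cont L : ℚ) = x * cont L.tail

/-- The bead sequence `β(f)` of a Z-reduced form `f = (A,B,C)` of discriminant `Δ`:
with `(t,u)` the fundamental solution of `|t² - Δu²| = 4` and `z = (t + Bu)/2`,
it is the continued fraction expansion of `z/(z - Au)` whose number of partial
quotients is even if `t² - Δu² = -4` and odd otherwise. -/
def QF.IsBeta (f : QF) (L : List ℤ) : Prop :=
  ∃ t u : ℤ, IsFundSol f.disc t u ∧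
    IsCF ((((t + f.b * u : ℤ) : ℚ) / 2) / ((((t + f.b * u : ℤ) : ℚ) / 2) - ((f.a * u : ℤ) : ℚ))) L ∧
    (t ^ 2 - f.disc * u ^ 2 = -4 → Even L.length) ∧
    (t ^ 2 - f.disc * u ^ 2 = 4 → Odd L.length)

/-- Dirichlet's map `γ(f)` for `f = (A,B,C)` in `G⁺` of discriminant `Δ`:
with `(t,u)` the fundamental solution of `|t² - Δu²| = 4` and `z = (t + Bu)/2`,
it is the continued fraction expansion of `z/(Au)` whose number of partial
quotients is odd if `t² - Δu² = -4` and even otherwise. -/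
def QF.IsGamma (f : QF) (L : List ℤ) : Prop :=
  ∃ t u : ℤ, IsFundSol f.disc t u ∧
    IsCF ((((t + f.b * u : ℤ) : ℚ) / 2) / ((f.a * u : ℤ) : ℚ)) L ∧
    (t ^ 2 - f.disc * u ^ 2 = -4 → Odd L.length) ∧
    (t ^ 2 - f.disc * u ^ 2 = 4 → Even L.length)

/-- The stars-and-bars map: `(q₁, …, q_l)` is sent to the binary string of length
`q₁ + ⋯ + q_l - 1` whose `j`-th character is `1` exactly at the partial sums
`q₁, q₁ + q₂, …, q₁ + ⋯ + q_{l-1}`. -/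
def sb : List ℤ → List Bool
  | [] => []
  | [q] => List.replicate (q - 1).toNat false
  | q :: r :: t => List.replicate (q - 1).toNat false ++ true :: sb (r :: t)

/-- `σ(f) = sb(β(f))`. -/
def QF.IsSigma (f : QF) (s : List Bool) : Prop :=
  ∃ L : List ℤ, f.IsBeta L ∧ s = sb L

/-- Zagier's reduction operator: `f ↦ f(nx + y, -x)` with `n = ⌈(B + √Δ)/(2A)⌉`. -/
noncomputable def RZ (f : QF) : QF :=
  f.transform ⌈((f.b : ℝ) + Real.sqrt (f.disc : ℝ)) / (2 * (f.a : ℝ))⌉ 1 (-1) 0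

/-- The number `δ` in Gauss's reduction operator: `|δ| = ⌊(B + √Δ)/(2|A|)⌋` with
`δ` having the sign of `A`. -/
noncomputable def gaussDelta (f : QF) : ℤ :=
  f.a.sign * ⌊((f.b : ℝ) + Real.sqrt (f.disc : ℝ)) / (2 * |(f.a : ℝ)|)⌋

/-- Gauss's reduction operator: `f ↦ f(δx + y, -x)`. -/
noncomputable def RG (f : QF) : QF := f.transform (gaussDelta f) 1 (-1) 0

/-- Add `1` to the last entry of a list. -/
def addLast : List ℤ → List ℤ
  | [] => []
  | [q] => [q + 1]
  | q :: r :: t => q :: addLast (r :: t)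

/-- Subtract `1` from the last entry of a list. -/
def subLast : List ℤ → List ℤ
  | [] => []
  | [q] => [q - 1]
  | q :: r :: t => q :: subLast (r :: t)

/-- Subtract `1` from the first entry of a list. -/
def decHead : List ℤ → List ℤ
  | [] => []
  | q :: t => (q - 1) :: t

/-- The operator `T_Z`: `(q₁,…,q_l) ↦ (q₁-1, q₂, …, q_{l-1}, q_l+1)` if `q₁ ≥ 2`;
`(q₂, q₁)` if `q₁ = 1` and `l = 2`; `(q₃, …, q_l, q₂, q₁)` if `q₁ = 1` and `l > 2`. -/
def TZ : List ℤ → List ℤ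
  | [] => []
  | [q] => [q]
  | q :: r :: s => if q = 1 then s ++ [r, 1] else (q - 1) :: addLast (r :: s)

/-- The map `μ` from G-reduced forms to Z-reduced forms. -/
def mu (f : QF) : QF :=
  if 0 < f.a then ⟨f.a, 2 * f.a + f.b, f.a + f.b + f.c⟩
  else ⟨f.a + f.b + f.c, f.b + 2 * f.c, f.c⟩

/-- The section `τ` of `β`: `τ((q₁,…,q_l)) = (A,B,C)` with `A = [q₁-1, q₂, …, q_l]`,
`C = [q₁, …, q_{l-1}, q_l - 1]`, `B = [q₁,…,q_l] + [q₁-1, q₂, …, q_{l-1}, q_l-1]`. -/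
def tau (L : List ℤ) : QF :=
  ⟨cont (decHead L), cont L + cont (subLast (decHead L)), cont (subLast L)⟩

/-- Multiply all coefficients of a form by `u`. -/
def QF.smul (u : ℤ) (f : QF) : QF := ⟨u * f.a, u * f.b, u * f.c⟩

/-- The reversal `(A,B,C)^R = (C,B,A)`. -/
def QF.rev (f : QF) : QF := ⟨f.c, f.b, f.a⟩

/-- The map `ρ((A,B,C)) = (-A, B, -C)`. -/
def rho (f : QF) : QF := ⟨-f.a, f.b, -f.c⟩

/-- A form is primitive if its coefficients have gcd 1. -/
def IsPrimitiveForm (f : QF) : Prop := Int.gcd f.a (Int.gcd f.b f.c) = 1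

/-- `SL₂(ℤ)`-equivalence of forms. -/
def FormEquiv (f g : QF) : Prop :=
  ∃ α β γ δ : ℤ, α * δ - β * γ = 1 ∧ g = f.transform α β γ δ

/-- A nonempty string is primitive if it differs from all of its nontrivial cyclic
shifts. -/
def PrimitiveList {α : Type*} (l : List α) : Prop :=
  l ≠ [] ∧ ∀ n, 0 < n → n < l.length → l.rotate n ≠ l

/-- The continuant `[q₂, …, q_{l-1}]` of the interior of a list, with the convention
that it is `0` for a list of length `≤ 1`. -/
def innerCont (L : List ℤ) : ℤ := if L.length ≤ 1 then 0 else cont (L.tail.dropLast)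

/-- The section `ξ` of `γ`: `ξ((q₁,…,q_l)) = (A,B,C)` with `A = [q₂,…,q_l]`,
`B = [q₁,…,q_l] - [q₂,…,q_{l-1}]`, `C = -[q₁,…,q_{l-1}]`. -/
def xiForm (L : List ℤ) : QF := ⟨cont L.tail, cont L - innerCont L, -(cont L.dropLast)⟩

/-- `p` is the minimal period of the purely periodic sequence `d`. -/
def IsMinPeriod {α : Type*} [Inhabited α] (d : ℕ → α) (p : List α) : Prop :=
  p ≠ [] ∧ (∀ n, d n = p.getD (n % p.length) default) ∧
    ∀ m, 0 < m → (∀ n, d (n + m) = d n) → p.length ≤ m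

/-- `d` is the sequence of partial quotients of the Denjoy continued fraction of `x`
(`true` = quotient 1, `false` = quotient 0): `ξ₀ = x`, `qₙ = 0` if `ξ_{n-1} < 1`,
`qₙ = 1` if `ξ_{n-1} > 1`, and `ξₙ = 1/(ξ_{n-1} - qₙ)`. -/
def IsDenjoySeq (x : ℝ) (d : ℕ → Bool) : Prop :=
  ∃ ξ : ℕ → ℝ, ξ 0 = x ∧
    ∀ n, ((ξ n < 1 ∧ d n = false) ∨ (1 < ξ n ∧ d n = true)) ∧
      ξ (n + 1) = 1 / (ξ n - if d n then 1 else 0)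

/-- `a` is the sequence of partial quotients of the regular continued fraction of `x`. -/
def IsRegCFSeq (x : ℝ) (a : ℕ → ℤ) : Prop :=
  ∃ ξ : ℕ → ℝ, ξ 0 = x ∧ ∀ n, a n = ⌊ξ n⌋ ∧ ξ (n + 1) = 1 / (ξ n - (a n : ℝ))

/-- Regular-to-Denjoy conversion: each partial quotient `q` becomes the string
`1 0 1 0 ⋯ 0 1` of `q` ones alternating with `q - 1` zeroes. -/
def regToDen (L : List ℤ) : List Bool :=
  (L.map fun q => true :: (List.replicate (q - 1).toNat [false, true]).flatten).flatten

/-- Replace each character `0` by the two characters `01`. -/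
def expand01 (s : List Bool) : List Bool :=
  (s.map fun b => if b then [true] else [false, true]).flatten

/-- A quadratic irrational. -/
def IsQuadIrrational (x : ℝ) : Prop :=
  Irrational x ∧ ∃ a b c : ℤ, a ≠ 0 ∧ (a : ℝ) * x ^ 2 + (b : ℝ) * x + (c : ℝ) = 0


namespace ContAux

lemma listrec2 {P : List ℤ → Prop} (h0 : P []) (h1 : ∀ q, P [q])
    (h2 : ∀ q r t, P (r::t) → P t → P (q::r::t)) : ∀ L, P L := by
  have H : ∀ n (L : List ℤ), L.length ≤ n → P L := by
    intro n
    induction n with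
    | zero =>
      intro L hL
      match L with
      | [] => exact h0
      | q :: t => simp at hL
    | succ n ih =>
      intro L hL
      match L with
      | [] => exact h0
      | [q] => exact h1 q
      | q :: r :: t =>
        refine h2 q r t (ih _ ?_) (ih _ ?_) <;> simp at hL ⊢ <;> omega
  exact fun L => H L.length L le_rfl

lemma cont_cons' (q : ℤ) {M : List ℤ} (hM : M ≠ []) :
    cont (q :: M) = q * cont M + cont M.tail := by
  cases M with
  | nil => exact absurd rfl hM
  | cons r t => rfl

lemma cont_pos : ∀ (L : List ℤ), (∀ q ∈ L, 0 < q) → 0 < cont L := by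
  refine listrec2 (by simp [cont]) (fun q => by simp [cont]) ?_
  intro q r t ih1 ih2 hpos
  have h1 : 0 < cont (r :: t) := ih1 fun x hx => hpos x (by simp at hx ⊢; tauto)
  have h2 : 0 < cont t := ih2 fun x hx => hpos x (by simp at hx ⊢; tauto)
  have hq : 0 < q := hpos q (by simp)
  show 0 < q * cont (r :: t) + cont t
  nlinarith

lemma tail_subLast : ∀ M : List ℤ, (subLast M).tail = subLast M.tail := by
  intro M
  match M with
  | [] => rfl
  | [q] => rfl
  | q :: r :: t => rfl

lemma subLast_ne_nil {M : List ℤ} (hM : M ≠ []) : subLast M ≠ [] := by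
  match M with
  | [] => exact absurd rfl hM
  | [q] => simp [subLast]
  | q :: r :: t => simp [subLast]

lemma subLast_decHead : ∀ M : List ℤ, subLast (decHead M) = decHead (subLast M) := by
  intro M
  match M with
  | [] => rfl
  | [q] => rfl
  | q :: r :: t => rfl

lemma cont_decHead {M : List ℤ} (hM : M ≠ []) :
    cont (decHead M) = cont M - cont M.tail := by
  match M with
  | [q] => show (q - 1 : ℤ) = q - 1; ring
  | q :: r :: t =>
    show (q-1) * cont (r :: t) + cont t = (q * cont (r :: t) + cont t) - cont (r :: t)
    ring

lemma tail_dropLast : ∀ M : List ℤ, M.tail.dropLast = M.dropLast.tail := by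
  intro M
  match M with
  | [] => rfl
  | [q] => rfl
  | q :: r :: t => rfl

lemma cont_subLast : ∀ (M : List ℤ), M ≠ [] →
    cont (subLast M) = cont M - cont M.dropLast := by
  refine listrec2 (by simp) (fun q => by intro _; show (q - 1 : ℤ) = q - cont []; simp [cont]) ?_
  intro q r t ih1 ih2 _
  have hrt : (r :: t : List ℤ) ≠ [] := by simp
  show cont (q :: subLast (r :: t)) = cont (q :: r :: t) - cont ((q :: r :: t).dropLast)
  rw [cont_cons' q (subLast_ne_nil hrt), tail_subLast, ih1 hrt]
  simp only [List.tail_cons]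
  cases t with
  | nil => simp [cont, subLast]; ring
  | cons s t' =>
    have ht : (s :: t' : List ℤ) ≠ [] := by simp
    have h1 : (q :: r :: s :: t').dropLast = q :: (r :: s :: t').dropLast := rfl
    have h2 : ((r :: s :: t').dropLast : List ℤ) ≠ [] := by
      show (r :: (s :: t').dropLast : List ℤ) ≠ []; simp
    rw [h1, cont_cons' q h2]
    have h3 : ((r :: s :: t').dropLast).tail = (s :: t').dropLast := by
      rw [← tail_dropLast]; rfl
    rw [h3, ih2 ht]
    have h4 : cont (q :: r :: s :: t') = q * cont (r :: s :: t') + cont (s :: t') := rfl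
    rw [h4]
    ring

lemma e_ident : ∀ (M : List ℤ), M ≠ [] →
    cont M * cont (subLast M.tail) - cont M.tail * cont (subLast M)
      = (-1 : ℤ) ^ (M.length + 1) := by
  refine listrec2 (by simp) (fun q => by intro _; simp [cont, subLast]) ?_
  intro q r t ih1 _ _
  have hrt : (r :: t : List ℤ) ≠ [] := by simp
  have e1 : cont (q :: r :: t) = q * cont (r :: t) + cont t := rfl
  have e2 : subLast (q :: r :: t) = q :: subLast (r :: t) := rfl
  have e3 : cont (q :: subLast (r :: t)) = q * cont (subLast (r :: t)) + cont (subLast t) := by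
    rw [cont_cons' q (subLast_ne_nil hrt), tail_subLast]; simp only [List.tail_cons]
  have ih := ih1 hrt
  show cont (q :: r :: t) * cont (subLast (r :: t)) -
      cont (r :: t) * cont (subLast (q :: r :: t)) = (-1 : ℤ) ^ ((q :: r :: t).length + 1)
  rw [e1, e2, e3]
  have hlen : ((q :: r :: t).length + 1) = ((r :: t).length + 1) + 1 := by simp
  rw [hlen, pow_succ]
  have : cont (r :: t) * cont (subLast t) - cont t * cont (subLast (r :: t))
      = (-1 : ℤ) ^ ((r :: t).length + 1) := ih
  linear_combination (-1 : ℤ) * this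

lemma d_ident {M : List ℤ} (hM : M ≠ []) :
    cont M * cont (subLast (decHead M)) - cont (decHead M) * cont (subLast M)
      = (-1 : ℤ) ^ M.length := by
  rw [subLast_decHead, cont_decHead (subLast_ne_nil hM), tail_subLast, cont_decHead hM]
  have he := e_ident M hM
  have hp : (-1 : ℤ) ^ M.length = -(-1 : ℤ) ^ (M.length + 1) := by rw [pow_succ]; ring
  rw [hp]
  linear_combination -he

end ContAux

namespace ContAux

lemma subLast_nonneg : ∀ (M : List ℤ), (∀ q ∈ M, 0 < q) → 0 ≤ cont (subLast M) := by
  refine listrec2 (by simp [subLast, cont]) (fun q => by intro h; have := h q (by simp); show (0:ℤ) ≤ q - 1; omega) ?_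
  intro q r t ih1 ih2 hpos
  have hrt : (r :: t : List ℤ) ≠ [] := by simp
  have e3 : cont (q :: subLast (r :: t)) = q * cont (subLast (r :: t)) + cont (subLast t) := by
    rw [cont_cons' q (subLast_ne_nil hrt), tail_subLast]; simp only [List.tail_cons]
  show 0 ≤ cont (q :: subLast (r :: t))
  rw [e3]
  have h1 := ih1 fun x hx => hpos x (by simp at hx ⊢; tauto)
  have h2 := ih2 fun x hx => hpos x (by simp at hx ⊢; tauto)
  have hq := hpos q (by simp)
  nlinarith

lemma subLast_pos : ∀ (M : List ℤ), 2 ≤ M.length → (∀ q ∈ M, 0 < q) →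
    1 ≤ cont (subLast M) := by
  refine listrec2 (by simp) (fun q => by simp) ?_
  intro q r t ih1 _ _ hpos
  have hrt : (r :: t : List ℤ) ≠ [] := by simp
  have e3 : cont (q :: subLast (r :: t)) = q * cont (subLast (r :: t)) + cont (subLast t) := by
    rw [cont_cons' q (subLast_ne_nil hrt), tail_subLast]; simp only [List.tail_cons]
  show 1 ≤ cont (q :: subLast (r :: t))
  rw [e3]
  have hq := hpos q (by simp)
  have hr := hpos r (by simp)
  cases t with
  | nil =>
    show 1 ≤ q * cont [r-1] + cont (subLast [])
    show 1 ≤ q * (r-1) + cont []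
    show 1 ≤ q * (r-1) + 1
    nlinarith
  | cons s t' =>
    have h1 : 1 ≤ cont (subLast (r :: s :: t')) := by
      refine ih1 (by simp) fun x hx => hpos x (by simp at hx ⊢; tauto)
    have h2 : 0 ≤ cont (subLast (s :: t')) := by
      refine subLast_nonneg _ fun x hx => hpos x (by simp at hx ⊢; tauto)
    nlinarith

lemma decHead_pos {L : List ℤ} (hlen : 2 ≤ L.length) (hpos : ∀ q ∈ L, 0 < q) :
    0 < cont (decHead L) := by
  match L with
  | q :: r :: t =>
    show 0 < cont ((q-1) :: r :: t)
    show 0 < (q-1) * cont (r :: t) + cont t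
    have h1 : 0 < cont (r :: t) := cont_pos _ fun x hx => hpos x (by simp at hx ⊢; tauto)
    have h2 : 0 < cont t := cont_pos _ fun x hx => hpos x (by simp at hx ⊢; tauto)
    have hq := hpos q (by simp)
    nlinarith

lemma D_eq {L : List ℤ} (hL : L ≠ []) :
    cont (subLast (decHead L)) = cont (subLast L) - cont (subLast L.tail) := by
  rw [subLast_decHead, cont_decHead (subLast_ne_nil hL), tail_subLast]

lemma D_nonneg {L : List ℤ} (hlen : 2 ≤ L.length) (hpos : ∀ q ∈ L, 0 < q) :
    0 ≤ cont (subLast (decHead L)) := by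
  match L with
  | q :: r :: t =>
    have hrt : (r :: t : List ℤ) ≠ [] := by simp
    show 0 ≤ cont (subLast ((q-1) :: r :: t))
    show 0 ≤ cont ((q-1) :: subLast (r :: t))
    rw [cont_cons' _ (subLast_ne_nil hrt), tail_subLast]
    simp only [List.tail_cons]
    have h1 : 0 ≤ cont (subLast (r :: t)) :=
      subLast_nonneg _ fun x hx => hpos x (by simp at hx ⊢; tauto)
    have h2 : 0 ≤ cont (subLast t) := by
      cases t with
      | nil => simp [subLast, cont]
      | cons s t' =>
        refine subLast_nonneg _ fun x hx => hpos x (by simp at hx ⊢; tauto)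
    have hq := hpos q (by simp)
    nlinarith

lemma k_eq {L : List ℤ} (hlen : 2 ≤ L.length) :
    cont L - cont (subLast (decHead L)) =
      cont L.tail + cont L.dropLast - cont (L.tail.dropLast) := by
  have hL : L ≠ [] := by intro h; rw [h] at hlen; simp at hlen
  have htl : L.tail ≠ [] := by
    match L with
    | q :: r :: t => simp
  rw [D_eq hL, cont_subLast L hL, cont_subLast L.tail htl]
  ring

lemma k_three {L : List ℤ} (hlen : 3 ≤ L.length) (hpos : ∀ q ∈ L, 0 < q) :
    3 ≤ cont L - cont (subLast (decHead L)) := by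
  rw [k_eq (by omega)]
  have htl : L.tail ≠ [] := by match L with | q :: r :: t => simp
  have hpt : ∀ q ∈ L.tail, 0 < q := fun x hx => hpos x (List.mem_of_mem_tail hx)
  have hpd : ∀ q ∈ L.dropLast, 0 < q := fun x hx => hpos x (List.dropLast_subset _ hx)
  have hptd : ∀ q ∈ L.tail.dropLast, 0 < q := fun x hx => hpt x (List.dropLast_subset _ hx)
  -- T - I ≥ 1
  have h1 : 1 ≤ cont L.tail - cont (L.tail.dropLast) := by
    rw [← cont_subLast L.tail htl]
    refine subLast_pos _ ?_ hpt
    match L with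
    | q :: r :: s :: t => simp at hlen ⊢
  -- Dr - I ≥ 1
  have h2 : 1 ≤ cont L.dropLast - cont (L.tail.dropLast) := by
    rw [tail_dropLast, ← cont_decHead (M := L.dropLast) ?_]
    · refine decHead_pos ?_ hpd
      rw [List.length_dropLast]; omega
    · intro h
      have := congrArg List.length h
      rw [List.length_dropLast] at this
      simp at this; omega
  have h3 : 0 < cont (L.tail.dropLast) := cont_pos _ hptd
  omega

lemma k_one {L : List ℤ} (hlen : 2 ≤ L.length) (hpos : ∀ q ∈ L, 0 < q) :
    1 ≤ cont L - cont (subLast (decHead L)) := by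
  rcases Nat.lt_or_ge L.length 3 with h3 | h3
  · have h2 : L.length = 2 := by omega
    obtain ⟨a, b, rfl⟩ := List.length_eq_two.mp h2
    have ha := hpos a (by simp)
    have hb := hpos b (by simp)
    have : cont [a, b] - cont (subLast (decHead [a, b])) = a + b - 1 := by
      show (a * b + cont []) - cont (subLast [a-1, b]) = a + b - 1
      show (a * b + cont []) - cont ((a-1) :: subLast [b]) = a + b - 1
      show (a * b + cont []) - ((a-1) * (b-1) + cont []) = a + b - 1
      show (a * b + 1) - ((a-1) * (b-1) + 1) = a + b - 1
      ring
    rw [this]; omega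
  · linarith [k_three h3 hpos]

lemma not_square_add4 {k : ℤ} (hk : 1 ≤ k) : ¬ IsSquare (k ^ 2 + 4) := by
  rintro ⟨r, hr⟩
  have hrr : |r| * |r| = k ^ 2 + 4 := by rw [abs_mul_abs_self]; omega
  have hs : 0 ≤ |r| := abs_nonneg r
  have h2 : k < |r| := by nlinarith
  have h3 : |r| < k + 2 := by nlinarith
  have h4 : |r| = k + 1 := by omega
  rw [h4] at hrr
  ring_nf at hrr
  have h5 : 2 * k = 3 := by linarith
  omega

lemma not_square_sub4 {k : ℤ} (hk : 3 ≤ k) : ¬ IsSquare (k ^ 2 - 4) := by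
  rintro ⟨r, hr⟩
  have hrr : |r| * |r| = k ^ 2 - 4 := by rw [abs_mul_abs_self]; omega
  have hs : 0 ≤ |r| := abs_nonneg r
  have h2 : k - 2 < |r| := by nlinarith
  have h3 : |r| < k := by nlinarith
  have h4 : |r| = k - 1 := by omega
  rw [h4] at hrr
  ring_nf at hrr
  have h5 : 2 * k = 5 := by linarith
  omega

end ContAux

namespace ContAux

lemma part1 (L : List ℤ) (hlen : 2 ≤ L.length) (hpos : ∀ q ∈ L, 0 < q) :
    (tau L).IsZReduced ∧
    (tau L).disc = (cont L - cont (subLast (decHead L))) ^ 2 + (-1 : ℤ) ^ L.length * 4 ∧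
    (∃ k : ℤ, (tau L).disc = k ^ 2 + 4 ∨ (tau L).disc = k ^ 2 - 4) ∧
    (tau L).IsBeta L := by
  have hL : L ≠ [] := by intro h; rw [h] at hlen; simp at hlen
  have htl : L.tail ≠ [] := by match L with | q :: r :: t => simp
  have hpt : ∀ q ∈ L.tail, 0 < q := fun x hx => hpos x (List.mem_of_mem_tail hx)
  have ha : (tau L).a = cont (decHead L) := rfl
  have hbb : (tau L).b = cont L + cont (subLast (decHead L)) := rfl
  have hcc : (tau L).c = cont (subLast L) := rfl
  have hXpos : 0 < cont L := cont_pos L hpos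
  have hTpos : 0 < cont L.tail := cont_pos _ hpt
  have hApos : 0 < cont (decHead L) := decHead_pos hlen hpos
  have hAeq : cont (decHead L) = cont L - cont L.tail := cont_decHead hL
  have hYpos : 1 ≤ cont (subLast L) := subLast_pos L hlen hpos
  have hDnn : 0 ≤ cont (subLast (decHead L)) := D_nonneg hlen hpos
  have hk1 : 1 ≤ cont L - cont (subLast (decHead L)) := k_one hlen hpos
  have hdid : cont L * cont (subLast (decHead L)) - cont (decHead L) * cont (subLast L)
      = (-1 : ℤ) ^ L.length := d_ident hL
  have hdisc : (tau L).disc = (cont L - cont (subLast (decHead L))) ^ 2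
      + (-1 : ℤ) ^ L.length * 4 := by
    show (tau L).b ^ 2 - 4 * (tau L).a * (tau L).c = _
    rw [hbb, ha, hcc]
    linear_combination 4 * hdid
  have hI : 0 < cont (L.tail.dropLast) :=
    cont_pos _ (fun x hx => hpt x (List.dropLast_subset _ hx))
  have hD2 : cont (subLast (decHead L)) = cont (subLast L) - cont (subLast L.tail) := D_eq hL
  have hD3 : cont (subLast L.tail) = cont L.tail - cont (L.tail.dropLast) :=
    cont_subLast L.tail htl
  have hBAC : cont (decHead L) + cont (subLast L)
      < cont L + cont (subLast (decHead L)) := by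
    rw [hAeq, hD2, hD3]; linarith
  have hZ : (tau L).IsZReduced := by
    refine ⟨⟨?_, ?_⟩, ?_, ?_, ?_, ?_⟩
    · rw [QF.disc] at hdisc ⊢
      rcases Nat.even_or_odd L.length with he | he
      · rw [he.neg_one_pow] at hdisc; nlinarith [hdisc, hk1]
      · rw [he.neg_one_pow] at hdisc
        have hk3 : 3 ≤ cont L - cont (subLast (decHead L)) := by
          rcases he with ⟨m, hm⟩
          exact k_three (by omega) hpos
        nlinarith [hdisc, hk3]
    · rw [hdisc]
      rcases Nat.even_or_odd L.length with he | he
      · rw [he.neg_one_pow]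
        have := not_square_add4 hk1
        simpa using this
      · rw [he.neg_one_pow]
        have hk3 : 3 ≤ cont L - cont (subLast (decHead L)) := by
          rcases he with ⟨m, hm⟩
          exact k_three (by omega) hpos
        have := not_square_sub4 hk3
        have h4 : (cont L - cont (subLast (decHead L))) ^ 2 + (-1) * 4
            = (cont L - cont (subLast (decHead L))) ^ 2 - 4 := by ring
        rw [h4]
        exact this
    · rw [ha]; exact hApos
    · rw [hbb]; linarith
    · rw [hcc]; linarith
    · rw [ha, hbb, hcc]; exact hBAC
  refine ⟨hZ, hdisc, ?_, ?_⟩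
  · refine ⟨cont L - cont (subLast (decHead L)), ?_⟩
    rcases Nat.even_or_odd L.length with he | he
    · left; rw [hdisc, he.neg_one_pow]; ring
    · right; rw [hdisc, he.neg_one_pow]; ring
  · -- IsBeta
    refine ⟨cont L - cont (subLast (decHead L)), 1, ⟨by linarith, one_pos, ?_, ?_⟩, ?_, ?_, ?_⟩
    · rw [one_pow, mul_one, hdisc]
      rcases Nat.even_or_odd L.length with he | he <;> rw [he.neg_one_pow]
      · have : (cont L - cont (subLast (decHead L))) ^ 2 -
            ((cont L - cont (subLast (decHead L))) ^ 2 + 1 * 4) = -4 := by ring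
        rw [this]; norm_num
      · have : (cont L - cont (subLast (decHead L))) ^ 2 -
            ((cont L - cont (subLast (decHead L))) ^ 2 + (-1) * 4) = 4 := by ring
        rw [this]; norm_num
    · intro t' u' _ hu' _; omega
    · refine ⟨hL, hpos, ?_⟩
      have hnum : ((cont L - cont (subLast (decHead L)) + (tau L).b * 1 : ℤ) : ℚ) / 2
          = (cont L : ℚ) := by
        rw [hbb]; push_cast; ring
      have hden : (((tau L).a * 1 : ℤ) : ℚ) = (cont L : ℚ) - (cont L.tail : ℚ) := by
        rw [ha, hAeq]; push_cast; ring
      rw [hnum, hden]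
      have hT0 : (cont L.tail : ℚ) ≠ 0 := by
        exact_mod_cast hTpos.ne'
      field_simp
      rw [sub_sub_cancel, div_self hT0]
    · intro h
      rw [one_pow, mul_one, hdisc] at h
      rcases Nat.even_or_odd L.length with he | he
      · exact he
      · exfalso; rw [he.neg_one_pow] at h; ring_nf at h; omega
    · intro h
      rw [one_pow, mul_one, hdisc] at h
      rcases Nat.even_or_odd L.length with he | he
      · exfalso; rw [he.neg_one_pow] at h; ring_nf at h; omega
      · exact he

end ContAux

namespace ContAux

set_option maxHeartbeats 2000000 in
lemma part2 (f : QF) (hf : f.IsZReduced)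
    (hk : ∃ k : ℤ, f.disc = k ^ 2 + 4 ∨ f.disc = k ^ 2 - 4)
    (L : List ℤ) (hb : f.IsBeta L) : tau L = f := by
  obtain ⟨⟨hdpos, hnsq⟩, hA, hB, hC, hAC⟩ := hf
  obtain ⟨t, u, hfund, hcf, hpm, hpp⟩ := hb
  obtain ⟨k0, hk0⟩ := hk
  obtain ⟨ht, hu, habs, hmin⟩ := hfund
  -- u = 1
  have hk00 : k0 ≠ 0 := by
    rintro rfl
    rcases hk0 with h | h
    · exact hnsq (by rw [h]; exact ⟨2, by norm_num⟩)
    · rw [h] at hdpos; norm_num at hdpos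
  have hu1 : u = 1 := by
    have h1 : |(|k0|) ^ 2 - f.disc * 1 ^ 2| = 4 := by
      rw [sq_abs, one_pow, mul_one]
      rcases hk0 with h | h
      · have h2 : k0 ^ 2 - (k0 ^ 2 + 4) = -4 := by ring
        rw [h, h2]; norm_num
      · have h2 : k0 ^ 2 - (k0 ^ 2 - 4) = 4 := by ring
        rw [h, h2]; norm_num
    have := hmin |k0| 1 (abs_pos.mpr hk00) one_pos h1
    omega
  subst hu1
  rw [one_pow, mul_one] at habs
  obtain ⟨e, he1, he4⟩ : ∃ e : ℤ, (e = 1 ∨ e = -1) ∧ t ^ 2 - f.disc = 4 * e := by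
    rcases (abs_eq (by norm_num : (0:ℤ) ≤ 4)).mp habs with h | h
    · exact ⟨1, Or.inl rfl, by linarith⟩
    · exact ⟨-1, Or.inr rfl, by linarith⟩
  obtain ⟨hL, hposL, hxeq⟩ := hcf
  have hdiscd : f.disc = f.b ^ 2 - 4 * f.a * f.c := rfl
  -- t + f.b is even
  obtain ⟨z, hz⟩ : ∃ z : ℤ, t + f.b = 2 * z := by
    have h1 : Even (t ^ 2 - f.b ^ 2) :=
      ⟨2 * e - 2 * (f.a * f.c), by rw [hdiscd] at he4; linarith⟩
    simp only [Int.even_sub, Int.even_pow] at h1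
    have h2 : Even (t + f.b) := Int.even_add.mpr (by tauto)
    obtain ⟨w, hw⟩ := h2
    exact ⟨w, by omega⟩
  have hXpos : 0 < cont L := cont_pos L hposL
  have hYpos : 0 < cont L.tail :=
    cont_pos _ (fun x hx => hposL x (List.mem_of_mem_tail hx))
  have hnum : ((t + f.b * 1 : ℤ) : ℚ) / 2 = (z : ℚ) := by
    have h1 : (t : ℚ) + (f.b : ℚ) = 2 * (z : ℚ) := by exact_mod_cast hz
    push_cast
    linarith
  rw [hnum] at hxeq
  have hden : ((f.a * 1 : ℤ) : ℚ) = (f.a : ℚ) := by push_cast; ring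
  rw [hden] at hxeq
  have hz0 : 0 < z := by linarith
  have hzA : (z : ℚ) - (f.a : ℚ) ≠ 0 := by
    intro h0
    rw [h0, div_zero, zero_mul] at hxeq
    exact absurd hxeq (by exact_mod_cast hXpos.ne')
  rw [div_mul_eq_mul_div, eq_div_iff hzA] at hxeq
  have keyZ : cont L * (z - f.a) = z * cont L.tail := by exact_mod_cast hxeq
  have ht2 : t = 2 * z - f.b := by linarith
  have hF : z ^ 2 - f.b * z + f.a * f.c = e := by
    rw [hdiscd, ht2] at he4
    have h4 : 4 * (z ^ 2 - f.b * z + f.a * f.c) = 4 * e := by linear_combination he4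
    linarith
  have hcop1 : IsCoprime z f.a := by
    rcases he1 with rfl | rfl
    · exact ⟨z - f.b, f.c, by linear_combination hF⟩
    · exact ⟨f.b - z, -f.c, by linear_combination -hF⟩
  have hAeq : cont (decHead L) = cont L - cont L.tail := cont_decHead hL
  have hcop2 : IsCoprime (cont L) (cont L.tail) := by
    have hdid := d_ident hL
    rw [hAeq] at hdid
    rcases Nat.even_or_odd L.length with he | he
    · rw [he.neg_one_pow] at hdid
      exact ⟨cont (subLast (decHead L)) - cont (subLast L), cont (subLast L),
        by linear_combination hdid⟩
    · rw [he.neg_one_pow] at hdid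
      exact ⟨cont (subLast L) - cont (subLast (decHead L)), -cont (subLast L),
        by linear_combination -hdid⟩
  have hd1 : z ∣ cont L := by
    refine hcop1.dvd_of_dvd_mul_right ⟨cont L - cont L.tail, by linarith [keyZ]⟩
  have hd2 : cont L ∣ z := by
    refine hcop2.dvd_of_dvd_mul_right ⟨z - f.a, by linarith [keyZ]⟩
  have hXz : cont L = z := Int.dvd_antisymm (le_of_lt hXpos) (le_of_lt hz0) hd2 hd1
  have hfa : f.a = cont L - cont L.tail := by
    rw [← hXz] at keyZ
    have h2 : cont L * (cont L - f.a) = cont L * cont L.tail := by linarith [keyZ]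
    have := mul_left_cancel₀ hXpos.ne' h2
    linarith
  -- parity
  have hlp : (-1 : ℤ) ^ L.length = -e := by
    rcases he1 with rfl | rfl
    · have hodd : Odd L.length := hpp (by rw [one_pow, mul_one]; linarith)
      rw [hodd.neg_one_pow]
    · have heven : Even L.length := hpm (by rw [one_pow, mul_one]; linarith)
      rw [heven.neg_one_pow]; ring
  have hdid0 := d_ident hL
  rw [hlp, hAeq, ← hfa] at hdid0
  -- hdid0 : cont L * D - f.a * C_L = -e
  have hfac : f.a * f.c = e + cont L * (f.b - cont L) := by
    rw [hXz]; linear_combination hF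
  have hsub : f.a * (f.c - cont (subLast L)) =
      cont L * (f.b - cont L - cont (subLast (decHead L))) := by
    linear_combination hfac + hdid0
  have hcop3 : IsCoprime (cont L) f.a := by
    obtain ⟨p, q, hpq⟩ := hcop2
    exact ⟨p + q, -q, by rw [hfa]; linear_combination hpq⟩
  obtain ⟨j, hj⟩ : (cont L : ℤ) ∣ f.c - cont (subLast L) :=
    hcop3.dvd_of_dvd_mul_left ⟨f.b - cont L - cont (subLast (decHead L)), hsub⟩
  have hj2 : f.b - cont L - cont (subLast (decHead L)) = f.a * j := by
    have h2 : cont L * (f.a * j) =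
        cont L * (f.b - cont L - cont (subLast (decHead L))) := by
      rw [← hsub, hj]; ring
    exact (mul_left_cancel₀ hXpos.ne' h2).symm
  -- bounds
  have hCL0 : 0 ≤ cont (subLast L) := subLast_nonneg L hposL
  have hDr : 0 < cont L.dropLast :=
    cont_pos _ (fun x hx => hposL x (List.dropLast_subset _ hx))
  have hCLX : cont (subLast L) ≤ cont L - 1 := by
    rw [cont_subLast L hL]; omega
  have hDC : cont (subLast (decHead L)) ≤ cont (subLast L) := by
    rw [D_eq hL]
    have h0 : 0 ≤ cont (subLast L.tail) :=
      subLast_nonneg _ (fun x hx => hposL x (List.mem_of_mem_tail hx))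
    linarith
  have hj0 : j = 0 := by
    rcases lt_trichotomy j 0 with hneg | h0 | hposj
    · exfalso
      have h1 : cont L * j ≤ cont L * (-1) :=
        mul_le_mul_of_nonneg_left (by omega) (le_of_lt hXpos)
      linarith [hj, hCLX, hC]
    · exact h0
    · exfalso
      have h1 : 0 ≤ (j - 1) * (cont L - f.a) :=
        mul_nonneg (by omega) (by linarith [hfa, hYpos])
      nlinarith [hAC, hj, hj2, hDC, h1]
  rw [hj0] at hj hj2
  have hga : cont (decHead L) = f.a := by rw [hAeq, hfa]
  have hgb : cont L + cont (subLast (decHead L)) = f.b := by linarith [hj2]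
  have hgc : cont (subLast L) = f.c := by linarith [hj]
  show QF.mk (cont (decHead L)) (cont L + cont (subLast (decHead L))) (cont (subLast L)) = f
  rw [hga, hgb, hgc]

end ContAux

/-- **Theorem (form from beads).** `τ : S₂ → Z̃` is a bijection with inverse the
restriction of `β`, and the discriminant of `τ((q₁,…,q_l))` is
`([q₁,…,q_l] - [q₁-1,q₂,…,q_{l-1},q_l-1])² + (-1)^l · 4`. -/
theorem stmt4 :
    (∀ L : List ℤ, 2 ≤ L.length → (∀ q ∈ L, 0 < q) →
      (tau L).IsZReduced ∧
      (tau L).disc =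
        (cont L - cont (subLast (decHead L))) ^ 2 + (-1 : ℤ) ^ L.length * 4 ∧
      (∃ k : ℤ, (tau L).disc = k ^ 2 + 4 ∨ (tau L).disc = k ^ 2 - 4) ∧
      (tau L).IsBeta L) ∧
    (∀ f : QF, f.IsZReduced →
      (∃ k : ℤ, f.disc = k ^ 2 + 4 ∨ f.disc = k ^ 2 - 4) →
      ∀ L : List ℤ, f.IsBeta L → tau L = f) := by
  exact ⟨fun L hlen hpos => ContAux.part1 L hlen hpos,
    fun f hf hk L hb => ContAux.part2 f hf hk L hb⟩
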